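/- arXiv:2307.12677 — 5 statements merged into one kernel-verified Lean document; each statement's English description precedes it below -/
import Mathlib

section
/- Consider the scalar linear test problem u'(t) = λu(t) with λ ∈ ℂ. Given u^n ∈ ℂ, Δt > 0, set z = λΔt and u^{n+1} = (1 + z + z²/2)u^n, and let û(t) = (1 − t²/Δt²)u^n + (t − t²/Δt)·λu^n + (t²/Δt²)·u^{n+1} for t ∈ [0, Δt] be the left-biased quadratic Hermite reconstruction, with residual R(t) = û'(t) − λû(t). Then √Δt · (∫₀^{Δt} |R(t)|² dt)^{1/2} = (1/(2√5))·Δt³·|λ|³·|u^n|. -/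
/-- Scaled `L²` norm of the residual of the left-biased quadratic Hermite
reconstruction of one step of any explicit second-order, two-stage Runge-Kutta
method applied to the linear test problem `u' = λu`. -/
theorem rk22_quadratic_hermite_residual_L2
    (lam : ℂ) (uN : ℂ) (Δt : ℝ) (hΔt : 0 < Δt)
    (z : ℂ) (hz : z = lam * Δt)
    (uN1 : ℂ) (huN1 : uN1 = (1 + z + z ^ 2 / 2) * uN)
    (uhat : ℝ → ℂ)
    (huhat : ∀ t : ℝ, uhat t =
      ((1 - t ^ 2 / Δt ^ 2 : ℝ) : ℂ) * uN +
      ((t - t ^ 2 / Δt : ℝ) : ℂ) * (lam * uN) +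
      ((t ^ 2 / Δt ^ 2 : ℝ) : ℂ) * uN1)
    (R : ℝ → ℂ)
    (hR : ∀ t : ℝ, R t = deriv uhat t - lam * uhat t) :
    Real.sqrt Δt * Real.sqrt (∫ t in (0 : ℝ)..Δt, ‖R t‖ ^ 2) =
      (1 / (2 * Real.sqrt 5)) * Δt ^ 3 * ‖lam‖ ^ 3 * ‖uN‖ := by
  have hΔ : (Δt : ℂ) ≠ 0 := by exact_mod_cast hΔt.ne'
  have huhat' : uhat = fun t : ℝ =>
      uN + (t : ℂ) * (lam * uN) + (t : ℂ) ^ 2 * (lam ^ 2 / 2 * uN) := by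
    funext t
    rw [huhat, huN1, hz]
    push_cast
    field_simp
    ring
  have hderiv : ∀ t : ℝ, deriv uhat t = lam * uN + (t : ℂ) * (lam ^ 2 * uN) := by
    intro t
    have hid : HasDerivAt (fun t : ℝ => (t : ℂ)) 1 t := by
      simpa using (hasDerivAt_id t).ofReal_comp
    have h1 : HasDerivAt (fun t : ℝ => (t : ℂ) * (lam * uN)) (lam * uN) t := by
      simpa using hid.mul_const (lam * uN)
    have h2' := (hid.mul hid).mul_const (lam ^ 2 / 2 * uN)
    have h2 : HasDerivAt (fun t : ℝ => (t : ℂ) ^ 2 * (lam ^ 2 / 2 * uN))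
        (2 * (t : ℂ) * (lam ^ 2 / 2 * uN)) t := by
      convert h2' using 2 with s
      · rfl
      · simp only [Pi.mul_apply]; ring
      · ring
    have := ((hasDerivAt_const t uN).add h1).add h2
    rw [huhat']
    refine this.deriv.trans ?_
    ring
  have hRt : ∀ t : ℝ, R t = -(lam ^ 3 * uN) * (t : ℂ) ^ 2 / 2 := by
    intro t
    rw [hR, hderiv, huhat']
    ring
  have habs : ∀ t : ℝ, ‖R t‖ ^ 2 =
      ‖lam‖ ^ 6 * ‖uN‖ ^ 2 / 4 * t ^ 4 := by
    intro t
    rw [hRt]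
    rw [norm_div, norm_mul, norm_neg, norm_mul, norm_pow, norm_pow,
      Complex.norm_real, Real.norm_eq_abs, Complex.norm_two]
    rw [div_pow, mul_pow, mul_pow, sq_abs, ← pow_mul]
    ring
  have hint : (∫ t in (0 : ℝ)..Δt, ‖R t‖ ^ 2) =
      ‖lam‖ ^ 6 * ‖uN‖ ^ 2 / 4 * (Δt ^ 5 / 5) := by
    have : (∫ t in (0 : ℝ)..Δt, ‖R t‖ ^ 2) =
        ∫ t in (0 : ℝ)..Δt, ‖lam‖ ^ 6 * ‖uN‖ ^ 2 / 4 * t ^ 4 := by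
      apply intervalIntegral.integral_congr
      intro t _
      exact habs t
    rw [this, intervalIntegral.integral_const_mul, integral_pow]
    norm_num
  rw [hint]
  have h5 : (0 : ℝ) < Real.sqrt 5 := Real.sqrt_pos.2 (by norm_num)
  have hrhs : 0 ≤ (1 / (2 * Real.sqrt 5)) * Δt ^ 3 * ‖lam‖ ^ 3 * ‖uN‖ := by
    positivity
  rw [← Real.sqrt_mul hΔt.le]
  rw [show Δt * (‖lam‖ ^ 6 * ‖uN‖ ^ 2 / 4 * (Δt ^ 5 / 5)) =
      ((1 / (2 * Real.sqrt 5)) * Δt ^ 3 * ‖lam‖ ^ 3 * ‖uN‖) ^ 2 from ?_]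
  · exact Real.sqrt_sq hrhs
  · have h20 : (1 / (2 * Real.sqrt 5)) ^ 2 = 1 / 20 := by
      rw [div_pow, mul_pow, Real.sq_sqrt (by norm_num : (0:ℝ) ≤ 5)]
      norm_num
    rw [mul_pow, mul_pow, mul_pow, h20]
    ring
end

section
/- Consider the scalar linear test problem u'(t) = λu(t) with λ ∈ ℂ. Given u^n ∈ ℂ, Δt > 0, set z = λΔt and u^{n+1} = (1 + z + z²/2 + z³/6)u^n (one step of any explicit third-order, three-stage Runge–Kutta method). Let û be the left-biased cubic Hermite reconstruction û(t) = (1 − t³/Δt³)u^n + (t − t³/Δt²)·λu^n + (t²/2 − t³/(2Δt))·λ²u^n + (t³/Δt³)·u^{n+1} for t ∈ [0, Δt], with residual R(t) = û'(t) − λû(t). Then |R(t)| = (1/6)·t³·|λ|⁴·|u^n| for all t ∈ [0, Δt], and consequently ∫₀^{Δt} |R(t)| dt = (1/24)·Δt⁴·|λ|⁴·|u^n|. -/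
/-- Pointwise residual and its `L¹` norm for the left-biased cubic Hermite
reconstruction of one step of any explicit third-order, three-stage Runge-Kutta
method applied to the linear test problem `u' = λu`. -/
theorem rk33_left_cubic_hermite_residual
    (lam : ℂ) (uN : ℂ) (Δt : ℝ) (hΔt : 0 < Δt)
    (z : ℂ) (hz : z = lam * Δt)
    (uN1 : ℂ) (huN1 : uN1 = (1 + z + z ^ 2 / 2 + z ^ 3 / 6) * uN)
    (uhat : ℝ → ℂ)
    (huhat : ∀ t : ℝ, uhat t =
      ((1 - t ^ 3 / Δt ^ 3 : ℝ) : ℂ) * uN +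
      ((t - t ^ 3 / Δt ^ 2 : ℝ) : ℂ) * (lam * uN) +
      ((t ^ 2 / 2 - t ^ 3 / (2 * Δt) : ℝ) : ℂ) * (lam ^ 2 * uN) +
      ((t ^ 3 / Δt ^ 3 : ℝ) : ℂ) * uN1)
    (R : ℝ → ℂ)
    (hR : ∀ t : ℝ, R t = deriv uhat t - lam * uhat t) :
    (∀ t ∈ Set.Icc (0 : ℝ) Δt,
      ‖R t‖ = (1 / 6) * t ^ 3 * ‖lam‖ ^ 4 * ‖uN‖) ∧
    (∫ t in (0 : ℝ)..Δt, ‖R t‖) =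
      (1 / 24) * Δt ^ 4 * ‖lam‖ ^ 4 * ‖uN‖ := by
  have hΔ : (Δt : ℂ) ≠ 0 := by exact_mod_cast hΔt.ne'
  -- simplified closed form of the reconstruction
  have huhat' : uhat = fun t : ℝ =>
      uN + (lam * uN) * (t : ℂ) + (lam ^ 2 * uN / 2) * (t : ℂ) ^ 2 +
        (lam ^ 3 * uN / 6) * (t : ℂ) ^ 3 := by
    funext t
    rw [huhat t, huN1, hz]
    push_cast
    field_simp
    ring_nf
  -- derivative of uhat
  have hder : ∀ t : ℝ, HasDerivAt uhat
      ((lam * uN) + (lam ^ 2 * uN / 2) * (2 * (t : ℂ)) +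
        (lam ^ 3 * uN / 6) * (3 * (t : ℂ) ^ 2)) t := by
    intro t
    have hg : HasDerivAt (fun w : ℂ =>
        uN + (lam * uN) * w + (lam ^ 2 * uN / 2) * w ^ 2 + (lam ^ 3 * uN / 6) * w ^ 3)
        ((lam * uN) * 1 + (lam ^ 2 * uN / 2) * (2 * (t : ℂ) ^ 1) +
          (lam ^ 3 * uN / 6) * (3 * (t : ℂ) ^ 2)) (t : ℂ) := by
      have h1 : HasDerivAt (fun w : ℂ => w) 1 (t : ℂ) := hasDerivAt_id _
      have h2 := hasDerivAt_pow 2 (t : ℂ)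
      have h3 := hasDerivAt_pow 3 (t : ℂ)
      exact
        ((((h1.const_mul (lam * uN)).const_add uN).add (h2.const_mul (lam ^ 2 * uN / 2))).add
          (h3.const_mul (lam ^ 3 * uN / 6))).congr_deriv (by norm_num)
    have := hg.comp_ofReal
    rw [huhat']
    simpa using this
  -- explicit residual
  have hRt : ∀ t : ℝ, R t = -(lam ^ 4 * uN / 6) * (t : ℂ) ^ 3 := by
    intro t
    rw [hR t, (hder t).deriv, huhat']
    ring
  have habs : ∀ t : ℝ, 0 ≤ t →
      ‖R t‖ = (1 / 6) * t ^ 3 * ‖lam‖ ^ 4 * ‖uN‖ := by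
    intro t ht
    rw [hRt t]
    have : (-(lam ^ 4 * uN / 6) * (t : ℂ) ^ 3) = -(1/6 : ℂ) * lam ^ 4 * uN * ((t:ℝ):ℂ) ^ 3 := by
      ring
    rw [this]
    simp [map_mul, map_pow, Complex.norm_real, abs_of_nonneg ht]
    ring
  refine ⟨fun t ht => habs t ht.1, ?_⟩
  have hcongr : (∫ t in (0:ℝ)..Δt, ‖R t‖) =
      ∫ t in (0:ℝ)..Δt, (1 / 6) * t ^ 3 * ‖lam‖ ^ 4 * ‖uN‖ := by
    apply intervalIntegral.integral_congr
    intro t ht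
    rw [Set.uIcc_of_le hΔt.le] at ht
    exact habs t ht.1
  rw [hcongr]
  have : (∫ t in (0:ℝ)..Δt, (1 / 6) * t ^ 3 * ‖lam‖ ^ 4 * ‖uN‖)
      = ((1/6) * ‖lam‖ ^ 4 * ‖uN‖) * ∫ t in (0:ℝ)..Δt, t ^ 3 := by
    rw [← intervalIntegral.integral_const_mul]
    apply intervalIntegral.integral_congr
    intro t _
    ring
  rw [this, integral_pow]
  ring
end

section
/- Consider the scalar linear test problem u'(t) = λu(t) with λ ∈ ℂ. Given u^n ∈ ℂ, Δt > 0, set z = λΔt and u^{n+1} = (1 + z + z²/2 + z³/6)u^n, and let û be the left-biased cubic Hermite reconstruction û(t) = (1 − t³/Δt³)u^n + (t − t³/Δt²)·λu^n + (t²/2 − t³/(2Δt))·λ²u^n + (t³/Δt³)·u^{n+1} for t ∈ [0, Δt], with residual R(t) = û'(t) − λû(t). Then √Δt · (∫₀^{Δt} |R(t)|² dt)^{1/2} = (1/(6√7))·Δt⁴·|λ|⁴·|u^n|. -/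
/-- Scaled `L²` norm of the residual of the left-biased cubic Hermite
reconstruction of one step of any explicit third-order, three-stage Runge-Kutta
method applied to the linear test problem `u' = λu`. -/
theorem rk33_left_cubic_hermite_residual_L2
    (lam : ℂ) (uN : ℂ) (Δt : ℝ) (hΔt : 0 < Δt)
    (z : ℂ) (hz : z = lam * Δt)
    (uN1 : ℂ) (huN1 : uN1 = (1 + z + z ^ 2 / 2 + z ^ 3 / 6) * uN)
    (uhat : ℝ → ℂ)
    (huhat : ∀ t : ℝ, uhat t =
      ((1 - t ^ 3 / Δt ^ 3 : ℝ) : ℂ) * uN +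
      ((t - t ^ 3 / Δt ^ 2 : ℝ) : ℂ) * (lam * uN) +
      ((t ^ 2 / 2 - t ^ 3 / (2 * Δt) : ℝ) : ℂ) * (lam ^ 2 * uN) +
      ((t ^ 3 / Δt ^ 3 : ℝ) : ℂ) * uN1)
    (R : ℝ → ℂ)
    (hR : ∀ t : ℝ, R t = deriv uhat t - lam * uhat t) :
    Real.sqrt Δt * Real.sqrt (∫ t in (0 : ℝ)..Δt, ‖R t‖ ^ 2) =
      (1 / (6 * Real.sqrt 7)) * Δt ^ 4 * ‖lam‖ ^ 4 * ‖uN‖ := by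
  have hΔc : (Δt : ℂ) ≠ 0 := Complex.ofReal_ne_zero.mpr hΔt.ne'
  -- û is the cubic Taylor polynomial of e^{λt} u^n
  have huhat' : uhat = fun t : ℝ =>
      uN * (1 + lam * t + lam ^ 2 * t ^ 2 / 2 + lam ^ 3 * t ^ 3 / 6) := by
    funext t
    rw [huhat, huN1, hz]
    push_cast
    have key : (Δt:ℂ) ^ 9 * ((Δt:ℂ))⁻¹ ^ 9 = 1 := by
      rw [← mul_pow, mul_inv_cancel₀ hΔc, one_pow]
    field_simp
    ring_nf
  -- derivative of û
  have hd : ∀ t : ℝ, HasDerivAt uhat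
      (uN * (lam + lam ^ 2 * t + lam ^ 3 * t ^ 2 / 2)) t := by
    intro t
    rw [huhat']
    have hg : HasDerivAt (fun w : ℂ =>
        uN * (1 + lam * w + lam ^ 2 * w ^ 2 / 2 + lam ^ 3 * w ^ 3 / 6))
        (uN * (lam + lam ^ 2 * t + lam ^ 3 * t ^ 2 / 2)) (t : ℂ) := by
      have h1 : HasDerivAt (fun w : ℂ => w) 1 (t : ℂ) := hasDerivAt_id _
      have h2 := hasDerivAt_pow 2 (t : ℂ)
      have h3 := hasDerivAt_pow 3 (t : ℂ)
      have := (((hasDerivAt_const (t : ℂ) (1 : ℂ)).add (h1.const_mul lam)).add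
        ((h2.const_mul (lam ^ 2)).div_const 2)).add
        ((h3.const_mul (lam ^ 3)).div_const 6)
      have := this.const_mul uN
      exact this.congr_deriv (by push_cast; ring)
    exact hg.comp_ofReal
  -- closed form for the residual
  have hRt : ∀ t : ℝ, R t = -(uN * lam ^ 4 * t ^ 3) / 6 := by
    intro t
    rw [hR, (hd t).deriv, huhat']
    ring
  have habs : ∀ t : ℝ, ‖R t‖ ^ 2 =
      ‖uN‖ ^ 2 * ‖lam‖ ^ 8 / 36 * t ^ 6 := by
    intro t
    rw [hRt]
    rw [norm_div, norm_neg, norm_mul, norm_mul, norm_pow, norm_pow]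
    simp [Complex.norm_real]
    have ht : (|t| ^ 3) ^ 2 = t ^ 6 := by
      rw [← abs_pow, sq_abs]; ring
    rw [div_pow, mul_pow, mul_pow, ht]
    ring
  have hint : (∫ t in (0 : ℝ)..Δt, ‖R t‖ ^ 2) =
      ‖uN‖ ^ 2 * ‖lam‖ ^ 8 / 36 * (Δt ^ 7 / 7) := by
    simp_rw [habs]
    rw [intervalIntegral.integral_const_mul, integral_pow]
    norm_num
  rw [hint, ← Real.sqrt_mul hΔt.le]
  have h7 : (0:ℝ) < Real.sqrt 7 := Real.sqrt_pos.mpr (by norm_num)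
  have hrhs : (0:ℝ) ≤ (1 / (6 * Real.sqrt 7)) * Δt ^ 4 * ‖lam‖ ^ 4 *
      ‖uN‖ := by positivity
  rw [← Real.sqrt_sq hrhs]
  congr 1
  have h7' : Real.sqrt 7 ^ 2 = 7 := Real.sq_sqrt (by norm_num)
  field_simp
  rw [h7']
  ring
end

section
/- Consider the scalar linear test problem u'(t) = λu(t) with λ ∈ ℂ. Given u^n ∈ ℂ, Δt > 0, set z = λΔt and u^{n+1} = (1 + z + z²/2 + z³/6)u^n. Let û be the central cubic Hermite reconstruction û(t) = (1 − 3t²/Δt² + 2t³/Δt³)u^n + (t − 2t²/Δt + t³/Δt²)·λu^n + (3t²/Δt² − 2t³/Δt³)·u^{n+1} + (−t²/Δt + t³/Δt²)·λu^{n+1} for t ∈ [0, Δt], with residual R(t) = û'(t) − λû(t). Then for all t ∈ [0, Δt], |R(t)| = (1/6)·t·(Δt − t)·|t − 2Δt + tΔtλ|·|λ|⁴·|u^n|. -/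
set_option maxHeartbeats 1000000

lemma cubic_hasDerivAt (c0 c1 c2 c3 : ℂ) (t : ℝ) :
    HasDerivAt (fun x : ℝ => c0 + c1 * (x : ℂ) + c2 * (x : ℂ) ^ 2 + c3 * (x : ℂ) ^ 3)
      (c1 + 2 * c2 * (t : ℂ) + 3 * c3 * (t : ℂ) ^ 2) t := by
  have hC : HasDerivAt (fun w : ℂ => c0 + c1 * w + c2 * w ^ 2 + c3 * w ^ 3)
      (c1 + 2 * c2 * (t : ℂ) + 3 * c3 * (t : ℂ) ^ 2) (t : ℂ) := by
    have h := (((hasDerivAt_const (t : ℂ) c0).add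
        ((hasDerivAt_id (t : ℂ)).const_mul c1)).add
        ((hasDerivAt_pow 2 (t : ℂ)).const_mul c2)).add
        ((hasDerivAt_pow 3 (t : ℂ)).const_mul c3)
    refine h.congr_deriv ?_
    push_cast
    ring
  exact hC.comp_ofReal

/-- Pointwise residual of the central cubic Hermite reconstruction of one step of
any explicit third-order, three-stage Runge-Kutta method applied to the linear
test problem `u' = λu`. -/
theorem rk33_central_cubic_hermite_residual_pointwise
    (lam : ℂ) (uN : ℂ) (Δt : ℝ) (hΔt : 0 < Δt)
    (z : ℂ) (hz : z = lam * Δt)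
    (uN1 : ℂ) (huN1 : uN1 = (1 + z + z ^ 2 / 2 + z ^ 3 / 6) * uN)
    (uhat : ℝ → ℂ)
    (huhat : ∀ t : ℝ, uhat t =
      ((1 - 3 * t ^ 2 / Δt ^ 2 + 2 * t ^ 3 / Δt ^ 3 : ℝ) : ℂ) * uN +
      ((t - 2 * t ^ 2 / Δt + t ^ 3 / Δt ^ 2 : ℝ) : ℂ) * (lam * uN) +
      ((3 * t ^ 2 / Δt ^ 2 - 2 * t ^ 3 / Δt ^ 3 : ℝ) : ℂ) * uN1 +
      ((-(t ^ 2) / Δt + t ^ 3 / Δt ^ 2 : ℝ) : ℂ) * (lam * uN1))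
    (R : ℝ → ℂ)
    (hR : ∀ t : ℝ, R t = deriv uhat t - lam * uhat t) :
    ∀ t ∈ Set.Icc (0 : ℝ) Δt,
      ‖R t‖ =
        (1 / 6) * t * (Δt - t) * ‖(t : ℂ) - 2 * Δt + t * Δt * lam‖ *
          ‖lam‖ ^ 4 * ‖uN‖ := by
  have hΔ0 : (Δt : ℝ) ≠ 0 := ne_of_gt hΔt
  have hΔ0' : (Δt : ℂ) ≠ 0 := by exact_mod_cast hΔ0
  -- clean cubic coefficients
  set c0 : ℂ := uN
  set c1 : ℂ := lam * uN
  set c2 : ℂ := lam ^ 2 * uN / 2 - lam ^ 4 * (Δt : ℂ) ^ 2 * uN / 6 with hc2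
  set c3 : ℂ := lam ^ 3 * uN / 6 + lam ^ 4 * (Δt : ℂ) * uN / 6 with hc3
  have key : ∀ t : ℝ, uhat t = c0 + c1 * (t : ℂ) + c2 * (t : ℂ) ^ 2 + c3 * (t : ℂ) ^ 3 := by
    intro t
    rw [huhat, huN1, hz, hc2, hc3]
    push_cast
    field_simp
    ring_nf
    field_simp
    ring
  have hderiv : ∀ t : ℝ, deriv uhat t = c1 + 2 * c2 * (t : ℂ) + 3 * c3 * (t : ℂ) ^ 2 := by
    intro t
    have heq : uhat = fun x : ℝ => c0 + c1 * (x : ℂ) + c2 * (x : ℂ) ^ 2 + c3 * (x : ℂ) ^ 3 :=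
      funext key
    rw [heq]
    exact (cubic_hasDerivAt _ _ _ _ t).deriv
  intro t ht
  have hRval : R t = ((1 / 6 * t * (Δt - t) : ℝ) : ℂ) *
      ((t : ℂ) - 2 * Δt + t * Δt * lam) * lam ^ 4 * uN := by
    rw [hR, hderiv t, key t, hc2, hc3]
    push_cast
    ring
  rw [hRval, norm_mul, norm_mul, norm_mul, norm_pow, Complex.norm_real, Real.norm_eq_abs]
  have hnn : (0 : ℝ) ≤ 1 / 6 * t * (Δt - t) := by
    have h1 := ht.1
    have h2 := sub_nonneg.mpr ht.2
    positivity
  rw [abs_of_nonneg hnn]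
end

section
/- Consider the scalar linear test problem u'(t) = λu(t) with λ ∈ ℂ. Given u^n ∈ ℂ, Δt > 0, set z = λΔt and u^{n+1} = (1 + z + z²/2 + z³/6)u^n, and let û be the central cubic Hermite reconstruction û(t) = (1 − 3t²/Δt² + 2t³/Δt³)u^n + (t − 2t²/Δt + t³/Δt²)·λu^n + (3t²/Δt² − 2t³/Δt³)·u^{n+1} + (−t²/Δt + t³/Δt²)·λu^{n+1} for t ∈ [0, Δt], with residual R(t) = û'(t) − λû(t). Then √Δt · (∫₀^{Δt} |R(t)|² dt)^{1/2} = (1/(6√105))·Δt⁴·|λ|⁴·|u^n|·√(8 + Δt²|λ|² − 5·Δt·Re(λ)). -/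
lemma cubic_hasDerivAt_s13 (a b c d : ℂ) (t : ℝ) :
    HasDerivAt (fun s : ℝ => a + b * (s : ℂ) + c * (s : ℂ) ^ 2 + d * (s : ℂ) ^ 3)
      (b + 2 * c * (t : ℂ) + 3 * d * (t : ℂ) ^ 2) t := by
  have ht : HasDerivAt (fun s : ℝ => ((s : ℂ))) 1 t := (hasDerivAt_id t).ofReal_comp
  have h2 : HasDerivAt (fun s : ℝ => ((s : ℂ)) ^ 2) (2 * (t:ℂ)) t := by
    have := ht.fun_mul ht
    simp only [← pow_two] at this
    exact this.congr_deriv (by ring)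
  have h3 : HasDerivAt (fun s : ℝ => ((s : ℂ)) ^ 3) (3 * (t:ℂ)^2) t := by
    have := h2.fun_mul ht
    have e : (fun y : ℝ => ((y:ℂ)) ^ 2 * (y:ℂ)) = fun y : ℝ => ((y:ℂ)) ^ 3 := by
      funext y; ring
    rw [e] at this
    exact this.congr_deriv (by ring)
  exact ((((ht.const_mul b).const_add a).fun_add (h2.const_mul c)).fun_add (h3.const_mul d)).congr_deriv (by ring)

lemma integral_poly6 (a2 a3 a4 a5 a6 b : ℝ) :
    ∫ t in (0:ℝ)..b, (a2*t^2 + a3*t^3 + a4*t^4 + a5*t^5 + a6*t^6) =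
      a2*b^3/3 + a3*b^4/4 + a4*b^5/5 + a5*b^6/6 + a6*b^7/7 := by
  have I : ∀ (n : ℕ) (c : ℝ), IntervalIntegrable (fun t : ℝ => c * t ^ n)
      MeasureTheory.volume 0 b := fun n c =>
    (intervalIntegral.intervalIntegrable_pow n).const_mul c
  have key : ∀ (n : ℕ) (c : ℝ), ∫ t in (0:ℝ)..b, c * t ^ n = c * b ^ (n+1) / (n+1) := by
    intro n c
    rw [intervalIntegral.integral_const_mul, integral_pow]
    simp
    ring
  calc ∫ t in (0:ℝ)..b, (a2*t^2 + a3*t^3 + a4*t^4 + a5*t^5 + a6*t^6)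
      = (∫ t in (0:ℝ)..b, a2*t^2) + (∫ t in (0:ℝ)..b, a3*t^3) + (∫ t in (0:ℝ)..b, a4*t^4)
        + (∫ t in (0:ℝ)..b, a5*t^5) + (∫ t in (0:ℝ)..b, a6*t^6) := by
        rw [← intervalIntegral.integral_add (I 2 a2) (I 3 a3),
          ← intervalIntegral.integral_add ((I 2 a2).add (I 3 a3)) (I 4 a4),
          ← intervalIntegral.integral_add (((I 2 a2).add (I 3 a3)).add (I 4 a4)) (I 5 a5),
          ← intervalIntegral.integral_add ((((I 2 a2).add (I 3 a3)).add (I 4 a4)).add (I 5 a5)) (I 6 a6)]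
    _ = a2*b^3/3 + a3*b^4/4 + a4*b^5/5 + a5*b^6/6 + a6*b^7/7 := by
        rw [key 2, key 3, key 4, key 5, key 6]; norm_num

lemma abs_sq_ofReal_add_mul (lam : ℂ) (P Q : ℝ) :
    ‖(P : ℂ) + lam * (Q : ℂ)‖ ^ 2
      = P ^ 2 + 2 * lam.re * (P * Q) + ‖lam‖ ^ 2 * Q ^ 2 := by
  rw [Complex.sq_norm, Complex.sq_norm, Complex.normSq_apply, Complex.normSq_apply]
  simp only [Complex.add_re, Complex.add_im, Complex.mul_re, Complex.mul_im,
    Complex.ofReal_re, Complex.ofReal_im]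
  ring

set_option maxHeartbeats 2000000 in
/-- Scaled `L²` norm of the residual of the central cubic Hermite reconstruction
of one step of any explicit third-order, three-stage Runge-Kutta method applied
to the linear test problem `u' = λu`. -/
theorem rk33_central_cubic_hermite_residual_L2
    (lam : ℂ) (uN : ℂ) (Δt : ℝ) (hΔt : 0 < Δt)
    (z : ℂ) (hz : z = lam * Δt)
    (uN1 : ℂ) (huN1 : uN1 = (1 + z + z ^ 2 / 2 + z ^ 3 / 6) * uN)
    (uhat : ℝ → ℂ)
    (huhat : ∀ t : ℝ, uhat t =
      ((1 - 3 * t ^ 2 / Δt ^ 2 + 2 * t ^ 3 / Δt ^ 3 : ℝ) : ℂ) * uN +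
      ((t - 2 * t ^ 2 / Δt + t ^ 3 / Δt ^ 2 : ℝ) : ℂ) * (lam * uN) +
      ((3 * t ^ 2 / Δt ^ 2 - 2 * t ^ 3 / Δt ^ 3 : ℝ) : ℂ) * uN1 +
      ((-(t ^ 2) / Δt + t ^ 3 / Δt ^ 2 : ℝ) : ℂ) * (lam * uN1))
    (R : ℝ → ℂ)
    (hR : ∀ t : ℝ, R t = deriv uhat t - lam * uhat t) :
    Real.sqrt Δt * Real.sqrt (∫ t in (0 : ℝ)..Δt, ‖R t‖ ^ 2) =
      (1 / (6 * Real.sqrt 105)) * Δt ^ 4 * ‖lam‖ ^ 4 * ‖uN‖ *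
        Real.sqrt (8 + Δt ^ 2 * ‖lam‖ ^ 2 - 5 * Δt * lam.re) := by
  have hΔ : Δt ≠ 0 := ne_of_gt hΔt
  have hΔ0 : (Δt : ℂ) ≠ 0 := by exact_mod_cast hΔ
  have hp : (Δt:ℝ)^3 ≠ 0 := pow_ne_zero 3 hΔ
  set A : ℂ := uN with hA
  set B : ℂ := lam * uN with hB
  set C : ℂ := ((-3)*(Δt:ℂ)*uN + (-2)*(Δt:ℂ)^2*(lam*uN) + 3*(Δt:ℂ)*uN1
      + (-(Δt:ℂ)^2)*(lam*uN1))/(Δt:ℂ)^3 with hC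
  set D : ℂ := (2*uN + (Δt:ℂ)*(lam*uN) + (-2)*uN1 + (Δt:ℂ)*(lam*uN1))/(Δt:ℂ)^3 with hD
  have hfun : uhat = fun s : ℝ => A + B * (s : ℂ) + C * (s : ℂ) ^ 2 + D * (s : ℂ) ^ 3 := by
    funext s
    rw [huhat s, hA, hB, hC, hD]
    have h1 : (1 - 3 * s ^ 2 / Δt ^ 2 + 2 * s ^ 3 / Δt ^ 3 : ℝ)
        = (Δt^3 - 3*s^2*Δt + 2*s^3)/Δt^3 := by rw [eq_div_iff hp]; field_simp
    have h2 : (s - 2 * s ^ 2 / Δt + s ^ 3 / Δt ^ 2 : ℝ)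
        = (s*Δt^3 - 2*s^2*Δt^2 + s^3*Δt)/Δt^3 := by rw [eq_div_iff hp]; field_simp
    have h3 : (3 * s ^ 2 / Δt ^ 2 - 2 * s ^ 3 / Δt ^ 3 : ℝ)
        = (3*s^2*Δt - 2*s^3)/Δt^3 := by rw [eq_div_iff hp]; field_simp
    have h4 : (-(s ^ 2) / Δt + s ^ 3 / Δt ^ 2 : ℝ)
        = (-(s^2)*Δt^2 + s^3*Δt)/Δt^3 := by
      rw [div_add_div _ _ hΔ (pow_ne_zero 2 hΔ),
        div_eq_div_iff (mul_ne_zero hΔ (pow_ne_zero 2 hΔ)) hp]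
      ring
    rw [h1, h2, h3, h4]
    push_cast
    field_simp
    ring
  have key : ∀ t : ℝ, R t = lam ^ 4 * uN / 6 *
      (((-2 * Δt ^ 2 * t + 3 * Δt * t ^ 2 - t ^ 3 : ℝ) : ℂ) +
        lam * ((Δt ^ 2 * t ^ 2 - Δt * t ^ 3 : ℝ) : ℂ)) := by
    intro t
    rw [hR t, hfun, (cubic_hasDerivAt_s13 A B C D t).deriv]
    rw [hA, hB, hC, hD, huN1, hz]
    push_cast
    field_simp
    ring
  have habs : ∀ t : ℝ, ‖R t‖ ^ 2
      = ‖lam‖ ^ 8 * ‖uN‖ ^ 2 / 36 *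
        ((-2*Δt^2*t + 3*Δt*t^2 - t^3)^2
          + 2*lam.re*((-2*Δt^2*t + 3*Δt*t^2 - t^3)*(Δt^2*t^2 - Δt*t^3))
          + ‖lam‖ ^ 2 * (Δt^2*t^2 - Δt*t^3)^2) := by
    intro t
    rw [key t, norm_mul, mul_pow, abs_sq_ofReal_add_mul]
    have : ‖lam ^ 4 * uN / 6‖ ^ 2
        = ‖lam‖ ^ 8 * ‖uN‖ ^ 2 / 36 := by
      rw [norm_div, norm_mul, norm_pow]
      simp only [Complex.norm_ofNat]
      ring
    rw [this]
  set m : ℝ := ‖lam‖ with hm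
  set U : ℝ := ‖uN‖ with hU
  set a : ℝ := lam.re with ha
  set K : ℝ := m ^ 8 * U ^ 2 / 36 with hK
  have hint : (∫ t in (0:ℝ)..Δt, ‖R t‖ ^ 2)
      = K * ((8*Δt^7 + Δt^9*m^2 - 5*Δt^8*a)/105) := by
    have congr1 : Set.EqOn (fun t => ‖R t‖ ^ 2)
        (fun t : ℝ => (K*(4*Δt^4))*t^2 + (K*(-12*Δt^3 - 4*a*Δt^4))*t^3
          + (K*(13*Δt^2 + 10*a*Δt^3 + m^2*Δt^4))*t^4
          + (K*(-6*Δt - 8*a*Δt^2 - 2*m^2*Δt^3))*t^5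
          + (K*(1 + 2*a*Δt + m^2*Δt^2))*t^6) (Set.uIcc 0 Δt) := by
      intro t _
      simp only
      rw [habs t, hK, hm, hU, ha]
      ring
    rw [intervalIntegral.integral_congr congr1, integral_poly6]
    ring
  rw [hint, ← Real.sqrt_mul hΔt.le]
  have hS : 0 ≤ 8 + Δt ^ 2 * m ^ 2 - 5 * Δt * a := by
    have h1 : a ≤ m := Complex.re_le_norm lam
    nlinarith [mul_le_mul_of_nonneg_left h1 (by linarith : (0:ℝ) ≤ 5*Δt),
      sq_nonneg (Δt * m - 5/2)]
  have hc : 0 ≤ (1 / (6 * Real.sqrt 105)) * Δt ^ 4 * m ^ 4 * U := by positivity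
  have hsq : Δt * (K * ((8*Δt^7 + Δt^9*m^2 - 5*Δt^8*a)/105))
      = ((1 / (6 * Real.sqrt 105)) * Δt ^ 4 * m ^ 4 * U) ^ 2
        * (8 + Δt ^ 2 * m ^ 2 - 5 * Δt * a) := by
    have e : (1/(6*Real.sqrt 105))^2 = 1/3780 := by
      rw [div_pow, mul_pow, Real.sq_sqrt (by norm_num : (0:ℝ) ≤ 105)]
      norm_num
    rw [mul_pow, mul_pow, mul_pow, e, hK]
    ring
  rw [hsq, Real.sqrt_mul (sq_nonneg _), Real.sqrt_sq hc]
end
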